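/- In the minority game with 2k+1 players, for any λ ∈ (0,1), the mixed strategy profile in which k players choose -1 with probability 1, k players choose +1 with probability 1, and one player chooses -1 with probability λ is a Nash equilibrium. -/

import Mathlib

open Finset

def mgPayoff (f : ℕ → ℝ) {N : ℕ} (a : Fin N → Bool) (i : Fin N) : ℝ :=
  f ((Finset.univ.filter fun j => a j = a i).card)

def mgPureNE (f : ℕ → ℝ) {N : ℕ} (a : Fin N → Bool) : Prop :=
  ∀ i : Fin N, mgPayoff f (Function.update a i (!(a i))) i ≤ mgPayoff f a i

noncomputable def mgProb {N : ℕ} (σ : Fin N → ℝ) (a : Fin N → Bool) : ℝ :=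
  ∏ j, if a j then σ j else 1 - σ j

noncomputable def mgEPay (f : ℕ → ℝ) {N : ℕ} (σ : Fin N → ℝ) (i : Fin N) : ℝ :=
  ∑ a : Fin N → Bool, mgProb σ a * f ((Finset.univ.filter fun j => a j = a i).card)

noncomputable def mgMixedNE (f : ℕ → ℝ) {N : ℕ} (σ : Fin N → ℝ) : Prop :=
  (∀ i, 0 ≤ σ i ∧ σ i ≤ 1) ∧
    ∀ (i : Fin N) (τ : ℝ), 0 ≤ τ → τ ≤ 1 →
      mgEPay f (Function.update σ i τ) i ≤ mgEPay f σ i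

lemma expand1 {N : ℕ} (σ : Fin N → ℝ) (j : Fin N) (b : Fin N → Bool)
    (hb : ∀ l, l ≠ j → σ l = if b l then 1 else 0)
    (g : (Fin N → Bool) → ℝ) :
    ∑ a : Fin N → Bool, mgProb σ a * g a =
      ∑ t : Bool, (if t then σ j else 1 - σ j) * g (Function.update b j t) := by
  classical
  set e : Bool → (Fin N → Bool) := fun t => Function.update b j t with he
  have hej : ∀ t, e t j = t := by intro t; simp [he]
  have hel : ∀ t l, l ≠ j → e t l = b l := by
    intro t l hlj; simp [he, Function.update, hlj]
  have hinj : Function.Injective e := fun p q h => by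
    have := congrFun h j; rwa [hej, hej] at this
  have hprob : ∀ t, mgProb σ (e t) = (if t then σ j else 1 - σ j) := by
    intro t
    unfold mgProb
    have h1 : ∏ l ∈ ({j} : Finset (Fin N)), (if e t l then σ l else 1 - σ l)
        = ∏ l, (if e t l then σ l else 1 - σ l) := by
      apply Finset.prod_subset (subset_univ _)
      intro l _ hl
      simp only [mem_singleton] at hl
      rw [hel t l hl, hb l hl]
      cases hbl : b l <;> simp
    rw [← h1, Finset.prod_singleton, hej]
  calc ∑ a : Fin N → Bool, mgProb σ a * g a
      = ∑ a ∈ Finset.image e univ, mgProb σ a * g a := by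
        symm
        apply Finset.sum_subset (subset_univ _)
        intro a _ ha
        have hex : ∃ l, a l ≠ e (a j) l := by
          by_contra h
          push_neg at h
          exact ha (mem_image.mpr ⟨a j, mem_univ _, (funext fun l => (h l).symm)⟩)
        obtain ⟨l, hl⟩ := hex
        have hlj : l ≠ j := by rintro rfl; rw [hej] at hl; exact hl rfl
        rw [hel _ l hlj] at hl
        have : mgProb σ a = 0 := by
          apply Finset.prod_eq_zero (mem_univ l)
          rw [hb l hlj]
          cases hal : a l
          · rw [hal] at hl
            have : b l = true := by revert hl; cases b l <;> simp
            simp [this]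
          · rw [hal] at hl
            have : b l = false := by revert hl; cases b l <;> simp
            simp [this]
        rw [this, zero_mul]
    _ = ∑ t : Bool, mgProb σ (e t) * g (e t) :=
        Finset.sum_image (fun p _ q _ h => hinj h)
    _ = _ := Finset.sum_congr rfl (fun t _ => by rw [hprob])

lemma expand2 {N : ℕ} (σ : Fin N → ℝ) (i j : Fin N) (hij : i ≠ j) (b : Fin N → Bool)
    (hb : ∀ l, l ≠ i → l ≠ j → σ l = if b l then 1 else 0)
    (g : (Fin N → Bool) → ℝ) :
    ∑ a : Fin N → Bool, mgProb σ a * g a =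
      ∑ p : Bool × Bool,
        ((if p.1 then σ i else 1 - σ i) * (if p.2 then σ j else 1 - σ j)) *
          g (Function.update (Function.update b i p.1) j p.2) := by
  classical
  set e : Bool × Bool → (Fin N → Bool) := fun p =>
    Function.update (Function.update b i p.1) j p.2 with he
  have hej : ∀ p, e p j = p.2 := by intro p; simp [he]
  have hei : ∀ p, e p i = p.1 := by
    intro p; simp [he, Function.update, hij]
  have hel : ∀ p l, l ≠ i → l ≠ j → e p l = b l := by
    intro p l hli hlj; simp [he, Function.update, hli, hlj]
  have hinj : Function.Injective e := fun p q h => by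
    have h1 := congrFun h i; have h2 := congrFun h j
    rw [hei, hei] at h1; rw [hej, hej] at h2
    exact Prod.ext h1 h2
  have hprob : ∀ p, mgProb σ (e p) =
      (if p.1 then σ i else 1 - σ i) * (if p.2 then σ j else 1 - σ j) := by
    intro p
    unfold mgProb
    have h1 : ∏ l ∈ ({i, j} : Finset (Fin N)), (if e p l then σ l else 1 - σ l)
        = ∏ l, (if e p l then σ l else 1 - σ l) := by
      apply Finset.prod_subset (subset_univ _)
      intro l _ hl
      simp only [mem_insert, mem_singleton, not_or] at hl
      rw [hel p l hl.1 hl.2, hb l hl.1 hl.2]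
      cases hbl : b l <;> simp
    rw [← h1, Finset.prod_pair hij, hei, hej]
  calc ∑ a : Fin N → Bool, mgProb σ a * g a
      = ∑ a ∈ Finset.image e univ, mgProb σ a * g a := by
        symm
        apply Finset.sum_subset (subset_univ _)
        intro a _ ha
        have hex : ∃ l, a l ≠ e (a i, a j) l := by
          by_contra h
          push_neg at h
          exact ha (mem_image.mpr ⟨(a i, a j), mem_univ _, (funext fun l => (h l).symm)⟩)
        obtain ⟨l, hl⟩ := hex
        have hli : l ≠ i := by rintro rfl; rw [hei] at hl; exact hl rfl
        have hlj : l ≠ j := by rintro rfl; rw [hej] at hl; exact hl rfl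
        rw [hel _ l hli hlj] at hl
        have : mgProb σ a = 0 := by
          apply Finset.prod_eq_zero (mem_univ l)
          rw [hb l hli hlj]
          cases hal : a l
          · rw [hal] at hl
            have : b l = true := by revert hl; cases b l <;> simp
            simp [this]
          · rw [hal] at hl
            have : b l = false := by revert hl; cases b l <;> simp
            simp [this]
        rw [this, zero_mul]
    _ = ∑ p : Bool × Bool, mgProb σ (e p) * g (e p) :=
        Finset.sum_image (fun p _ q _ h => hinj h)
    _ = _ := Finset.sum_congr rfl (fun t _ => by rw [hprob])

lemma filter_update_true {N : ℕ} (b : Fin N → Bool) (x : Fin N) :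
    (univ.filter fun l => Function.update b x true l = true) =
      insert x (univ.filter fun l => b l = true) := by
  ext l
  by_cases h : l = x <;> simp [Function.update_apply, h]

lemma filter_update_false {N : ℕ} (b : Fin N → Bool) (x : Fin N) :
    (univ.filter fun l => Function.update b x false l = true) =
      (univ.filter fun l => b l = true).erase x := by
  ext l
  by_cases h : l = x <;> simp [Function.update_apply, h]

lemma card_filter_false {N : ℕ} (a : Fin N → Bool) :
    (univ.filter fun l => a l = false).card = N - (univ.filter fun l => a l = true).card := by
  classical
  have h := Finset.card_filter_add_card_filter_not
    (s := (univ : Finset (Fin N))) (p := fun l => a l = true)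
  simp only [Bool.not_eq_true, card_univ, Fintype.card_fin] at h
  omega

theorem stmt_6 (k : ℕ) (f : ℕ → ℝ) (hf : StrictAntiOn f (Set.Icc 1 (2 * k + 1)))
    (lam : ℝ) (hlam : lam ∈ Set.Ioo (0:ℝ) 1)
    (σ : Fin (2 * k + 1) → ℝ) (j : Fin (2 * k + 1))
    (hj : σ j = lam)
    (hpure : ∀ i, i ≠ j → σ i = 0 ∨ σ i = 1)
    (hcard : (Finset.univ.filter fun i => σ i = 1).card = k) :
    mgMixedNE f σ := by
  classical
  obtain ⟨hlam0, hlam1⟩ := hlam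
  set T : Finset (Fin (2*k+1)) := univ.filter (fun i => σ i = 1) with hT
  have hjT : j ∉ T := by
    simp only [hT, mem_filter, mem_univ, true_and, hj]
    exact ne_of_lt hlam1
  set b : Fin (2*k+1) → Bool := fun l => if σ l = 1 then true else false with hbdef
  have hbT : (univ.filter fun l => b l = true) = T := by
    ext l
    by_cases h : σ l = 1 <;> simp [hbdef, hT, h]
  have hb : ∀ l, l ≠ j → σ l = if b l then 1 else 0 := by
    intro l hlj
    rcases hpure l hlj with h | h
    · have : ¬ (σ l = 1) := by rw [h]; norm_num
      simp [hbdef, this, h]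
    · simp [hbdef, h]
  constructor
  · intro i
    by_cases hij : i = j
    · subst hij; rw [hj]; exact ⟨hlam0.le, hlam1.le⟩
    · rcases hpure i hij with h | h <;> simp [h]
  intro i τ hτ0 hτ1
  by_cases hij : i = j
  · -- deviator is the mixing player: payoff constant f (k+1)
    subst hij
    have key : ∀ (ρ : Fin (2*k+1) → ℝ), (∀ l, l ≠ i → ρ l = if b l then 1 else 0) →
        mgEPay f ρ i = ρ i * f (k+1) + (1 - ρ i) * f (k+1) := by
      intro ρ hρ
      rw [mgEPay, expand1 ρ i b hρ, Fintype.sum_bool]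
      have ct : (univ.filter fun l => Function.update b i true l
          = Function.update b i true i).card = k + 1 := by
        rw [Function.update_self]
        rw [filter_update_true, hbT, card_insert_of_notMem hjT, hcard]
      have cf : (univ.filter fun l => Function.update b i false l
          = Function.update b i false i).card = k + 1 := by
        rw [Function.update_self, card_filter_false, filter_update_false, hbT,
          Finset.erase_eq_of_notMem hjT, hcard]
        omega
      rw [ct, cf]
      simp
    have h1 := key σ hb
    have h2 := key (Function.update σ i τ)
      (fun l hl => by rw [Function.update_of_ne hl]; exact hb l hl)
    rw [h1, h2, Function.update_self]
    have e1 : ∀ x : ℝ, x * f (k+1) + (1-x) * f (k+1) = f (k+1) := by intro x; ring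
    rw [e1, e1]
  · -- deviator is a pure player
    have hk1 : 1 ≤ k := by
      rcases Nat.eq_zero_or_pos k with h | h
      · subst h
        exact absurd (Fin.ext (by omega)) hij
      · exact h
    have hb2 : ∀ l, l ≠ i → l ≠ j → σ l = if b l then 1 else 0 := fun l _ hlj => hb l hlj
    have hfk : f (k+2) < f k :=
      hf (Set.mem_Icc.mpr ⟨hk1, by omega⟩) (Set.mem_Icc.mpr ⟨by omega, by omega⟩) (by omega)
    rcases hpure i hij with hσi | hσi
    · -- σ i = 0 : i plays false
      have hiT : i ∉ T := by
        simp only [hT, mem_filter, mem_univ, true_and, hσi]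
        norm_num
      have hbi : b i = false := by
        have : ¬ (σ i = 1) := by rw [hσi]; norm_num
        simp [hbdef, this]
      have hjiT : j ∉ insert i T := by
        simp only [mem_insert]
        push_neg
        exact ⟨fun h => hij h.symm, hjT⟩
      have cTT : (univ.filter fun l => (Function.update (Function.update b i true) j true) l
          = (Function.update (Function.update b i true) j true) i).card = k + 2 := by
        rw [Function.update_of_ne hij, Function.update_self]
        rw [filter_update_true, filter_update_true, hbT,
          card_insert_of_notMem hjiT, card_insert_of_notMem hiT, hcard]
      have cTF : (univ.filter fun l => (Function.update (Function.update b i true) j false) l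
          = (Function.update (Function.update b i true) j false) i).card = k + 1 := by
        rw [Function.update_of_ne hij, Function.update_self]
        rw [filter_update_false, filter_update_true, hbT,
          Finset.erase_eq_of_notMem hjiT, card_insert_of_notMem hiT, hcard]
      have cFT : (univ.filter fun l => (Function.update (Function.update b i false) j true) l
          = (Function.update (Function.update b i false) j true) i).card = k := by
        rw [Function.update_of_ne hij, Function.update_self, card_filter_false,
          filter_update_true, filter_update_false, hbT,
          Finset.erase_eq_of_notMem hiT, card_insert_of_notMem hjT, hcard]
        omega
      have cFF : (univ.filter fun l => (Function.update (Function.update b i false) j false) l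
          = (Function.update (Function.update b i false) j false) i).card = k + 1 := by
        rw [Function.update_of_ne hij, Function.update_self, card_filter_false,
          filter_update_false, filter_update_false, hbT,
          Finset.erase_eq_of_notMem hiT, Finset.erase_eq_of_notMem hjT, hcard]
        omega
      have key : ∀ (ρ : Fin (2*k+1) → ℝ), (∀ l, l ≠ i → l ≠ j → ρ l = if b l then 1 else 0) →
          ρ j = lam →
          mgEPay f ρ i = (ρ i * lam) * f (k+2) + (ρ i * (1-lam)) * f (k+1)
            + ((1 - ρ i) * lam) * f k + ((1 - ρ i) * (1-lam)) * f (k+1) := by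
        intro ρ hρ hρj
        rw [mgEPay, expand2 ρ i j hij b hρ, Fintype.sum_prod_type]
        simp only [Fintype.sum_bool]
        rw [cTT, cTF, cFT, cFF, hρj]
        norm_num
        ring
      have h1 := key σ hb2 hj
      have h2 := key (Function.update σ i τ)
        (fun l hl1 hl2 => by rw [Function.update_of_ne hl1]; exact hb2 l hl1 hl2)
        (by rw [Function.update_of_ne (fun h => hij h.symm)]; exact hj)
      rw [h1, h2, Function.update_self, hσi]
      nlinarith [mul_nonneg (mul_nonneg hτ0 hlam0.le) (sub_nonneg.2 hfk.le)]
    · -- σ i = 1 : i plays true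
      have hiT : i ∈ T := by simp [hT, hσi]
      have hbi : b i = true := by simp [hbdef, hσi]
      have hins : insert i T = T := Finset.insert_eq_self.mpr hiT
      have hjTe : j ∉ T.erase i := fun h => hjT (Finset.mem_of_mem_erase h)
      have cTT : (univ.filter fun l => (Function.update (Function.update b i true) j true) l
          = (Function.update (Function.update b i true) j true) i).card = k + 1 := by
        rw [Function.update_of_ne hij, Function.update_self]
        rw [filter_update_true, filter_update_true, hbT, hins,
          card_insert_of_notMem hjT, hcard]
      have cTF : (univ.filter fun l => (Function.update (Function.update b i true) j false) l
          = (Function.update (Function.update b i true) j false) i).card = k := by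
        rw [Function.update_of_ne hij, Function.update_self]
        rw [filter_update_false, filter_update_true, hbT, hins,
          Finset.erase_eq_of_notMem hjT, hcard]
      have cFT : (univ.filter fun l => (Function.update (Function.update b i false) j true) l
          = (Function.update (Function.update b i false) j true) i).card = k + 1 := by
        rw [Function.update_of_ne hij, Function.update_self, card_filter_false,
          filter_update_true, filter_update_false, hbT,
          card_insert_of_notMem hjTe, Finset.card_erase_of_mem hiT, hcard]
        omega
      have cFF : (univ.filter fun l => (Function.update (Function.update b i false) j false) l
          = (Function.update (Function.update b i false) j false) i).card = k + 2 := by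
        rw [Function.update_of_ne hij, Function.update_self, card_filter_false,
          filter_update_false, filter_update_false, hbT,
          Finset.erase_eq_of_notMem hjTe, Finset.card_erase_of_mem hiT, hcard]
        omega
      have key : ∀ (ρ : Fin (2*k+1) → ℝ), (∀ l, l ≠ i → l ≠ j → ρ l = if b l then 1 else 0) →
          ρ j = lam →
          mgEPay f ρ i = (ρ i * lam) * f (k+1) + (ρ i * (1-lam)) * f k
            + ((1 - ρ i) * lam) * f (k+1) + ((1 - ρ i) * (1-lam)) * f (k+2) := by
        intro ρ hρ hρj
        rw [mgEPay, expand2 ρ i j hij b hρ, Fintype.sum_prod_type]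
        simp only [Fintype.sum_bool]
        rw [cTT, cTF, cFT, cFF, hρj]
        norm_num
        ring
      have h1 := key σ hb2 hj
      have h2 := key (Function.update σ i τ)
        (fun l hl1 hl2 => by rw [Function.update_of_ne hl1]; exact hb2 l hl1 hl2)
        (by rw [Function.update_of_ne (fun h => hij h.symm)]; exact hj)
      rw [h1, h2, Function.update_self, hσi]
      nlinarith [mul_nonneg (mul_nonneg (sub_nonneg.2 hτ1) (sub_nonneg.2 hlam1.le))
        (sub_nonneg.2 hfk.le)]
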